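/- Every Schottky-like subgroup of PSL(n+1,ℂ) is a discrete subgroup of PSL(n+1,ℂ). -/

import Mathlib

open scoped MatrixGroups
open Matrix Filter Topology

set_option synthInstance.maxHeartbeats 1000000
set_option maxHeartbeats 1000000

noncomputable section

namespace Paper

/-- `ℂ^{n+1}`. -/
abbrev V (n : ℕ) : Type := Fin (n + 1) → ℂ

/-- Complex projective `n`-space `ℙⁿ(ℂ)`. -/
abbrev PC (n : ℕ) : Type := Projectivization ℂ (V n)

/-- `PSL(n+1, ℂ)`. -/
abbrev PSL (n : ℕ) : Type := Matrix.ProjectiveSpecialLinearGroup (Fin (n + 1)) ℂ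

instance (n : ℕ) : TopologicalSpace (PC n) :=
  inferInstanceAs (TopologicalSpace (Quotient (projectivizationSetoid ℂ (V n))))

instance (n : ℕ) : TopologicalSpace (SpecialLinearGroup (Fin (n + 1)) ℂ) :=
  inferInstanceAs (TopologicalSpace {A : Matrix (Fin (n + 1)) (Fin (n + 1)) ℂ // A.det = 1})

/-- The projective transformation of `ℙⁿ(ℂ)` induced by a linear automorphism. -/
def projMap {n : ℕ} (e : V n ≃ₗ[ℂ] V n) : Equiv.Perm (PC n) where
  toFun := Projectivization.map (e : V n →ₗ[ℂ] V n) e.injective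
  invFun := Projectivization.map (e.symm : V n →ₗ[ℂ] V n) e.symm.injective
  left_inv x := by
    induction x using Projectivization.ind with
    | h v hv => simp [Projectivization.map_mk]
  right_inv x := by
    induction x using Projectivization.ind with
    | h v hv => simp [Projectivization.map_mk]

/-- The action of `SL(n+1, ℂ)` on `ℙⁿ(ℂ)`, as a homomorphism to permutations. -/
def SLproj (n : ℕ) : SpecialLinearGroup (Fin (n + 1)) ℂ →* Equiv.Perm (PC n) where
  toFun g := projMap (Matrix.SpecialLinearGroup.toLin' g)
  map_one' := by
    ext x
    induction x using Projectivization.ind with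
    | h v hv => simp [projMap, Projectivization.map_mk]
  map_mul' g h := by
    ext x
    induction x using Projectivization.ind with
    | h v hv => simp [projMap, Projectivization.map_mk]

lemma SLproj_center (n : ℕ) (g : SpecialLinearGroup (Fin (n + 1)) ℂ)
    (hg : g ∈ Subgroup.center (SpecialLinearGroup (Fin (n + 1)) ℂ)) : SLproj n g = 1 := by
  obtain ⟨r, hr, hg'⟩ := Matrix.SpecialLinearGroup.mem_center_iff.mp hg
  have hr0 : r ≠ 0 := by
    intro h
    rw [h] at hr
    simp at hr
  ext x
  induction x using Projectivization.ind with
  | h v hv =>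
    show Projectivization.map ((Matrix.SpecialLinearGroup.toLin' g : V n ≃ₗ[ℂ] V n) :
        V n →ₗ[ℂ] V n) (Matrix.SpecialLinearGroup.toLin' g).injective
        (Projectivization.mk ℂ v hv) = Projectivization.mk ℂ v hv
    rw [Projectivization.map_mk]
    have hv' : (Matrix.SpecialLinearGroup.toLin' g : V n →ₗ[ℂ] V n) v = r • v := by
      rw [Matrix.SpecialLinearGroup.toLin'_to_linearMap, Matrix.toLin'_apply, ← hg']
      funext i
      simp [Matrix.scalar, Matrix.mulVec_diagonal]
    simp only [hv']
    rw [Projectivization.mk_eq_mk_iff]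
    exact ⟨Units.mk0 r hr0, rfl⟩

/-- The action of `PSL(n+1, ℂ)` on `ℙⁿ(ℂ)`. -/
def PSLproj (n : ℕ) : PSL n →* Equiv.Perm (PC n) :=
  QuotientGroup.lift _ (SLproj n) (fun g hg => SLproj_center n g hg)

instance (n : ℕ) : MulAction (PSL n) (PC n) := MulAction.compHom _ (PSLproj n)

/-- The standard Hermitian form of signature `(n, 1)` (i.e. `(1, n)` in the paper's
convention): `⟨z,w⟩ = z₁ w̄₁ + ⋯ + z_n w̄_n − z_{n+1} w̄_{n+1}`. -/
def herm (n : ℕ) (z w : V n) : ℂ :=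
  (∑ i : Fin n, z i.castSucc * (starRingEnd ℂ) (w i.castSucc))
    - z (Fin.last n) * (starRingEnd ℂ) (w (Fin.last n))

/-- Complex hyperbolic space `ℍⁿ_ℂ = {[w] : ⟨w,w⟩ < 0} ⊂ ℙⁿ(ℂ)`. -/
def ball (n : ℕ) : Set (PC n) := {p | (herm n p.rep p.rep).re < 0}

/-- The boundary `∂ℍⁿ_ℂ = {[w] : ⟨w,w⟩ = 0}`. -/
def bd (n : ℕ) : Set (PC n) := {p | herm n p.rep p.rep = 0}

/-- An `SL(n+1,ℂ)` matrix preserves the Hermitian form (i.e. lies in `SU(1,n)`). -/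
def PreservesHerm {n : ℕ} (g : SpecialLinearGroup (Fin (n + 1)) ℂ) : Prop :=
  ∀ z w : V n, herm n (Matrix.SpecialLinearGroup.toLin' g z)
      (Matrix.SpecialLinearGroup.toLin' g w) = herm n z w

/-- `SU(1,n)` as a subgroup of `SL(n+1,ℂ)`. -/
def SU (n : ℕ) : Subgroup (SpecialLinearGroup (Fin (n + 1)) ℂ) where
  carrier := {g | PreservesHerm g}
  one_mem' := by intro z w; simp
  mul_mem' := by
    intro a b ha hb z w
    rw [_root_.map_mul]
    exact (ha (Matrix.SpecialLinearGroup.toLin' b z)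
      (Matrix.SpecialLinearGroup.toLin' b w)).trans (hb z w)
  inv_mem' := by
    intro g hg z w
    have h2 : ∀ u : V n, Matrix.SpecialLinearGroup.toLin' g
        (Matrix.SpecialLinearGroup.toLin' g⁻¹ u) = u := by
      intro u
      have h : (Matrix.SpecialLinearGroup.toLin' g) * (Matrix.SpecialLinearGroup.toLin' g⁻¹)
          = 1 := by rw [← _root_.map_mul]; simp
      exact congrArg (fun e : V n ≃ₗ[ℂ] V n => e u) h
    calc herm n (Matrix.SpecialLinearGroup.toLin' g⁻¹ z)
          (Matrix.SpecialLinearGroup.toLin' g⁻¹ w)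
        = herm n (Matrix.SpecialLinearGroup.toLin' g (Matrix.SpecialLinearGroup.toLin' g⁻¹ z))
          (Matrix.SpecialLinearGroup.toLin' g (Matrix.SpecialLinearGroup.toLin' g⁻¹ w)) :=
          (hg _ _).symm
      _ = herm n z w := by rw [h2, h2]

/-- `PU(1,n)`, realized as the image of `SU(1,n)` inside `PSL(n+1,ℂ)`. -/
def PU (n : ℕ) : Subgroup (PSL n) :=
  (SU n).map (QuotientGroup.mk' (Subgroup.center (SpecialLinearGroup (Fin (n + 1)) ℂ)))

/-- The polar hyperplane `p^⊥` of a point of `ℙⁿ(ℂ)` w.r.t. the Hermitian form. -/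
def polar {n : ℕ} (p : PC n) : Set (PC n) := {q | herm n q.rep p.rep = 0}

/-- Fixed points of `g : PSL(n+1,ℂ)` on the boundary of complex hyperbolic space. -/
def boundaryFix {n : ℕ} (g : PSL n) : Set (PC n) := {p ∈ bd n | g • p = p}

/-- `g` is loxodromic: exactly two fixed points on `∂ℍⁿ_ℂ`. -/
def IsLoxodromic {n : ℕ} (g : PSL n) : Prop :=
  ∃ a r : PC n, a ≠ r ∧ boundaryFix g = {a, r}

/-- `a` is an attracting fixed point of `g`. -/
def Attracting {n : ℕ} (g : PSL n) (a : PC n) : Prop :=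
  g • a = a ∧ ∃ U ∈ 𝓝 a, ∀ x ∈ U, Tendsto (fun m : ℕ => (g ^ m) • x) atTop (𝓝 a)

/-- `r` is a repelling fixed point of `g`. -/
def Repelling {n : ℕ} (g : PSL n) (r : PC n) : Prop := Attracting g⁻¹ r

/-- The Chen–Greenberg limit set with base point `x`. -/
def limitSetCG {n : ℕ} (Γ : Subgroup (PSL n)) (x : PC n) : Set (PC n) :=
  closure {p | ∃ g ∈ Γ, g • x = p} ∩ bd n

/-- A Schottky-like subgroup of `PSL(n+1,ℂ)` (Definition in §2 of the paper). -/
def IsSchottkyLike {n : ℕ} (Γ : Subgroup (PSL n)) : Prop :=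
  ∃ (S : Finset (PSL n)) (A : PSL n → Set (PC n)),
    (∀ a ∈ S, a⁻¹ ∈ S) ∧
    Subgroup.closure (S : Set (PSL n)) = Γ ∧
    (∀ a ∈ S, IsCompact (A a) ∧ (A a).Nonempty) ∧
    ((S : Set (PSL n)).Pairwise fun a b => Disjoint (A a) (A b)) ∧
    ∀ a ∈ S, (⋃ b ∈ (S : Set (PSL n)) \ {a⁻¹}, (a • ·) '' A b) ⊂ A a



instance (n : ℕ) : IsTopologicalGroup (SpecialLinearGroup (Fin (n + 1)) ℂ) where
  continuous_mul := by
    apply continuous_induced_rng.2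
    exact ((continuous_subtype_val.comp continuous_fst).matrix_mul
        (continuous_subtype_val.comp continuous_snd))
  continuous_inv := by
    apply continuous_induced_rng.2
    have : Continuous fun g : SpecialLinearGroup (Fin (n+1)) ℂ =>
        Matrix.adjugate (g : Matrix (Fin (n+1)) (Fin (n+1)) ℂ) :=
      continuous_subtype_val.matrix_adjugate
    exact this.congr (fun g => (Matrix.SpecialLinearGroup.coe_inv g).symm)

instance (n : ℕ) : T2Space (SpecialLinearGroup (Fin (n + 1)) ℂ) :=
  T2Space.of_injective_continuous Subtype.val_injective continuous_subtype_val

instance (n : ℕ) : IsClosed ((Subgroup.center (SpecialLinearGroup (Fin (n + 1)) ℂ)) :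
    Set (SpecialLinearGroup (Fin (n + 1)) ℂ)) := by
  have : ((Subgroup.center (SpecialLinearGroup (Fin (n + 1)) ℂ)) :
      Set (SpecialLinearGroup (Fin (n + 1)) ℂ)) =
      ⋂ h : SpecialLinearGroup (Fin (n + 1)) ℂ, {g | h * g = g * h} := by
    ext g
    simp [Subgroup.mem_center_iff, Set.mem_iInter]
  rw [this]
  exact isClosed_iInter fun h =>
    isClosed_eq (continuous_const.mul continuous_id) (continuous_id.mul continuous_const)

example (n : ℕ) : T2Space (PSL n) := inferInstance
example (n : ℕ) : IsTopologicalGroup (PSL n) := inferInstance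

/-- Outer-projection map used to embed `ℙⁿ(ℂ)` into matrices. -/
def outerMat (n : ℕ) (v : V n) : Matrix (Fin (n + 1)) (Fin (n + 1)) ℂ :=
  Matrix.of fun i j => (∑ k, (starRingEnd ℂ) (v k) * v k)⁻¹ * (v i * (starRingEnd ℂ) (v j))

lemma sum_conj_mul_ne_zero {n : ℕ} {v : V n} (hv : v ≠ 0) :
    (∑ k, (starRingEnd ℂ) (v k) * v k) ≠ 0 := by
  have h : ∀ k, (starRingEnd ℂ) (v k) * v k = (Complex.normSq (v k) : ℂ) := by
    intro k; rw [Complex.normSq_eq_conj_mul_self]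
  intro h0
  rw [Finset.sum_congr rfl (fun k _ => h k)] at h0
  rw [← Complex.ofReal_sum] at h0
  have h1 : (∑ k, Complex.normSq (v k)) = 0 := by exact_mod_cast h0
  have h2 : ∀ k ∈ Finset.univ, Complex.normSq (v k) = 0 := by
    intro k _
    exact (Finset.sum_eq_zero_iff_of_nonneg (fun k _ => Complex.normSq_nonneg _)).1 h1 k
      (Finset.mem_univ k)
  apply hv
  funext k
  exact Complex.normSq_eq_zero.mp (h2 k (Finset.mem_univ k))

lemma outerMat_smul (n : ℕ) (a : ℂˣ) (v : V n) (hv : v ≠ 0) :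
    outerMat n ((a : ℂ) • v) = outerMat n v := by
  ext i j
  simp only [outerMat, Matrix.of_apply, Pi.smul_apply, smul_eq_mul, _root_.map_mul]
  have hsum : (∑ k, (starRingEnd ℂ) (a:ℂ) * (starRingEnd ℂ) (v k) * ((a:ℂ) * v k))
      = ((starRingEnd ℂ) (a:ℂ) * (a:ℂ)) * ∑ k, (starRingEnd ℂ) (v k) * v k := by
    rw [Finset.mul_sum]; apply Finset.sum_congr rfl; intro k _; ring
  rw [hsum]
  have ha : ((starRingEnd ℂ) (a:ℂ)) ≠ 0 := by simp [a.ne_zero]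
  rw [mul_inv, mul_inv]
  have hc : (∑ k, (starRingEnd ℂ) (v k) * v k) ≠ 0 := sum_conj_mul_ne_zero hv
  field_simp

/-- `outerMat` descends to the projectivization. -/
def outerProj (n : ℕ) : PC n → Matrix (Fin (n + 1)) (Fin (n + 1)) ℂ :=
  Quotient.lift (fun v : {v : V n // v ≠ 0} => outerMat n v.1) (by
    rintro ⟨v, hv⟩ ⟨w, hw⟩ ⟨a, rfl⟩
    exact outerMat_smul n a w hw)

lemma outerProj_mk (n : ℕ) (v : V n) (hv : v ≠ 0) :
    outerProj n (Projectivization.mk ℂ v hv) = outerMat n v := rfl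

lemma continuous_outerProj (n : ℕ) : Continuous (outerProj n) := by
  apply continuous_quot_lift
  have h1 : Continuous fun v : {v : V n // v ≠ 0} => (∑ k, (starRingEnd ℂ) (v.1 k) * v.1 k) := by
    apply continuous_finset_sum
    intro k _
    exact (Complex.continuous_conj.comp ((continuous_apply k).comp continuous_subtype_val)).mul
      ((continuous_apply k).comp continuous_subtype_val)
  apply continuous_matrix
  intro i j
  exact (h1.inv₀ (fun v => sum_conj_mul_ne_zero v.2)).mul
    ((((continuous_apply i).comp continuous_subtype_val)).mul
      (Complex.continuous_conj.comp ((continuous_apply j).comp continuous_subtype_val)))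

lemma injective_outerProj (n : ℕ) : Function.Injective (outerProj n) := by
  intro p q hpq
  induction p using Projectivization.ind with
  | h v hv =>
  induction q using Projectivization.ind with
  | h w hw =>
  rw [outerProj_mk, outerProj_mk] at hpq
  obtain ⟨j, hj⟩ : ∃ j, w j ≠ 0 := by
    by_contra hc
    push_neg at hc
    exact hw (funext hc)
  set cv := (∑ k, (starRingEnd ℂ) (v k) * v k) with hcv
  set cw := (∑ k, (starRingEnd ℂ) (w k) * w k) with hcw
  have hα : ∀ i, cv⁻¹ * (v i * (starRingEnd ℂ) (v j)) = cw⁻¹ * (w i * (starRingEnd ℂ) (w j)) := by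
    intro i
    have := congrFun (congrFun hpq i) j
    simpa [outerMat, hcv, hcw] using this
  set α := cv⁻¹ * (starRingEnd ℂ) (v j) with hαdef
  set β := cw⁻¹ * (starRingEnd ℂ) (w j) with hβdef
  have key : ∀ i, v i * α = w i * β := by
    intro i; rw [hαdef, hβdef]; linear_combination hα i
  have hβ0 : β ≠ 0 := by
    apply mul_ne_zero
    · exact inv_ne_zero (sum_conj_mul_ne_zero hw)
    · simpa using hj
  have hα0 : α ≠ 0 := by
    intro h0
    apply hw
    funext i
    have hk := key i
    rw [h0, mul_zero] at hk
    have := mul_eq_zero.mp hk.symm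
    tauto
  rw [Projectivization.mk_eq_mk_iff]
  refine ⟨Units.mk0 (β * α⁻¹) (mul_ne_zero hβ0 (inv_ne_zero hα0)), ?_⟩
  funext i
  have hk := key i
  show (β * α⁻¹) * w i = v i
  field_simp
  linear_combination -hk

instance (n : ℕ) : T2Space (PC n) :=
  T2Space.of_injective_continuous (injective_outerProj n) (continuous_outerProj n)
lemma toLin'_eq_mulVec {n : ℕ} (g : SpecialLinearGroup (Fin (n + 1)) ℂ) (v : V n) :
    (Matrix.SpecialLinearGroup.toLin' g : V n →ₗ[ℂ] V n) v = (g : Matrix (Fin (n + 1)) (Fin (n + 1)) ℂ) *ᵥ v := by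
  rw [Matrix.SpecialLinearGroup.toLin'_to_linearMap, Matrix.toLin'_apply]

lemma mulVec_ne_zero {n : ℕ} (g : SpecialLinearGroup (Fin (n + 1)) ℂ) (v : V n) (hv : v ≠ 0) :
    (g : Matrix (Fin (n + 1)) (Fin (n + 1)) ℂ) *ᵥ v ≠ 0 := by
  rw [← toLin'_eq_mulVec]
  intro h0
  apply hv
  have := (Matrix.SpecialLinearGroup.toLin' g).injective (a₁ := v) (a₂ := 0)
  simp only [map_zero] at this
  exact this h0

lemma psl_smul_mk {n : ℕ} (g : SpecialLinearGroup (Fin (n + 1)) ℂ) (v : V n) (hv : v ≠ 0) :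
    (QuotientGroup.mk g : PSL n) • Projectivization.mk ℂ v hv
      = Projectivization.mk ℂ ((g : Matrix (Fin (n + 1)) (Fin (n + 1)) ℂ) *ᵥ v) (mulVec_ne_zero g v hv) := by
  show PSLproj n (QuotientGroup.mk g) (Projectivization.mk ℂ v hv) = _
  have h1 : PSLproj n (QuotientGroup.mk g) = SLproj n g := rfl
  rw [h1]
  show Projectivization.map ((Matrix.SpecialLinearGroup.toLin' g : V n ≃ₗ[ℂ] V n) :
      V n →ₗ[ℂ] V n) (Matrix.SpecialLinearGroup.toLin' g).injective
      (Projectivization.mk ℂ v hv) = _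
  rw [Projectivization.map_mk]
  have h2 : (Matrix.SpecialLinearGroup.toLin' g : V n →ₗ[ℂ] V n) v
      = (g : Matrix (Fin (n + 1)) (Fin (n + 1)) ℂ) *ᵥ v := toLin'_eq_mulVec g v
  congr 1

lemma continuous_orbit {n : ℕ} (x : PC n) : Continuous fun g : PSL n => g • x := by
  have hE : (fun g : PSL n => g • x) = Quotient.lift
      (fun g₀ : SpecialLinearGroup (Fin (n + 1)) ℂ => (QuotientGroup.mk g₀ : PSL n) • x)
      (fun a b hab => by
        have h : (QuotientGroup.mk a : PSL n) = QuotientGroup.mk b := Quotient.sound hab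
        show (QuotientGroup.mk a : PSL n) • x = (QuotientGroup.mk b : PSL n) • x
        rw [h]) := by
    funext g
    refine QuotientGroup.induction_on g ?_
    intro g₀
    rfl
  rw [hE]
  apply continuous_quot_lift
  induction x using Projectivization.ind with
  | h v hv =>
  have hE2 : (fun g₀ : SpecialLinearGroup (Fin (n + 1)) ℂ =>
      (QuotientGroup.mk g₀ : PSL n) • Projectivization.mk ℂ v hv)
      = fun g₀ : SpecialLinearGroup (Fin (n + 1)) ℂ => Projectivization.mk ℂ
        ((g₀ : Matrix (Fin (n + 1)) (Fin (n + 1)) ℂ) *ᵥ v) (mulVec_ne_zero g₀ v hv) := by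
    funext g₀; rw [psl_smul_mk]
  rw [hE2]
  have hcont : Continuous fun g₀ : SpecialLinearGroup (Fin (n + 1)) ℂ =>
      (⟨(g₀ : Matrix (Fin (n + 1)) (Fin (n + 1)) ℂ) *ᵥ v, mulVec_ne_zero g₀ v hv⟩ : {w : V n // w ≠ 0}) :=
    Continuous.subtype_mk (continuous_subtype_val.matrix_mulVec continuous_const) _
  exact continuous_quotient_mk'.comp hcont

lemma continuous_psl_smul {n : ℕ} (g : PSL n) : Continuous fun p : PC n => g • p := by
  refine QuotientGroup.induction_on g ?_
  intro g₀
  have hE : (fun p : PC n => (QuotientGroup.mk g₀ : PSL n) • p) = Quotient.lift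
      (fun v : {v : V n // v ≠ 0} =>
        Projectivization.mk ℂ ((g₀ : Matrix (Fin (n + 1)) (Fin (n + 1)) ℂ) *ᵥ v.1) (mulVec_ne_zero g₀ v.1 v.2))
      (by
        rintro ⟨v, hv⟩ ⟨w, hw⟩ ⟨a, rfl⟩
        rw [Projectivization.mk_eq_mk_iff]
        refine ⟨a, ?_⟩
        rw [Matrix.mulVec_smul]) := by
    funext p
    induction p using Projectivization.ind with
    | h v hv => rw [psl_smul_mk]; rfl
  rw [hE]
  apply continuous_quot_lift
  exact continuous_quotient_mk'.comp
    (Continuous.subtype_mk (continuous_const.matrix_mulVec continuous_subtype_val) _)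
lemma reduce_list {G : Type*} [Group G] (S : Set G) :
    ∀ l : List G, (∀ x ∈ l, x ∈ S) → ∃ r : List G, (∀ x ∈ r, x ∈ S) ∧
      r.Chain' (fun p q => q ≠ p⁻¹) ∧ r.prod = l.prod := by
  intro l
  induction l with
  | nil => exact fun _ => ⟨[], by simp, List.isChain_nil, rfl⟩
  | cons a t ih =>
    intro hmem
    obtain ⟨r, hr1, hr2, hr3⟩ := ih (fun x hx => hmem x (List.mem_cons_of_mem a hx))
    have ha : a ∈ S := hmem a (List.mem_cons_self (a := a) (l := t))
    match r, hr1, hr2, hr3 with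
    | [], _, _, hr3 =>
      refine ⟨[a], by simpa using ha, List.isChain_singleton a, ?_⟩
      simp only [List.prod_cons, List.prod_nil] at hr3 ⊢
      rw [← hr3, mul_one]
    | b :: r', hr1, hr2, hr3 =>
      by_cases hb : b = a⁻¹
      · refine ⟨r', fun x hx => hr1 x (List.mem_cons_of_mem b hx), hr2.tail, ?_⟩
        rw [List.prod_cons] at hr3 ⊢
        rw [← hr3, hb, ← mul_assoc, mul_inv_cancel, one_mul]
      · refine ⟨a :: b :: r', ?_, ?_, ?_⟩
        · intro x hx
          rcases List.mem_cons.1 hx with rfl | hx'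
          · exact ha
          · exact hr1 x hx'
        · exact List.isChain_cons_cons.2 ⟨hb, hr2⟩
        · rw [List.prod_cons, hr3, List.prod_cons]

lemma mem_closure_symm_list {G : Type*} [Group G] {S : Set G} (hS : ∀ a ∈ S, a⁻¹ ∈ S)
    {g : G} (hg : g ∈ Subgroup.closure S) :
    ∃ l : List G, (∀ x ∈ l, x ∈ S) ∧ l.Chain' (fun p q => q ≠ p⁻¹) ∧ l.prod = g := by
  have h1 : g ∈ Submonoid.closure (S ∪ S⁻¹) := by
    rw [← Subgroup.closure_toSubmonoid]; exact hg
  have h2 : S ∪ S⁻¹ = S := by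
    apply Set.union_eq_self_of_subset_right
    intro x hx
    have hx' : x⁻¹ ∈ S := Set.mem_inv.1 hx
    simpa using hS _ hx'
  rw [h2] at h1
  obtain ⟨l, hl1, hl2⟩ := Submonoid.exists_list_of_mem_closure h1
  obtain ⟨r, hr1, hr2, hr3⟩ := reduce_list S l hl1
  exact ⟨r, hr1, hr2, hr3.trans hl2⟩
/-- every Schottky-like subgroup of `PSL(n+1,ℂ)` is discrete. -/
theorem schottkyLike_discrete (n : ℕ) (Γ : Subgroup (PSL n))
    (h : IsSchottkyLike Γ) : DiscreteTopology Γ := by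
  classical
  obtain ⟨S, A, hsym, hclo, hcomp, hdisj, hstr⟩ := h
  by_cases hcard : S.card ≤ 1
  · -- degenerate case: Γ is finite, hence discrete
    have hsub : (Γ : Set (PSL n)) ⊆ insert 1 (S : Set (PSL n)) := by
      intro g hg
      rw [← hclo] at hg
      obtain ⟨l, hl1, hl2, hl3⟩ := mem_closure_symm_list (fun a ha => hsym a ha) hg
      match l, hl1, hl2, hl3 with
      | [], _, _, hl3 => left; exact hl3.symm
      | [a], hl1, _, hl3 =>
        right
        rw [← hl3]
        simpa using hl1 a (by simp)
      | a :: b :: t, hl1, hl2, hl3 =>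
        exfalso
        have ha : a ∈ S := hl1 a (by simp)
        have hb : b ∈ S := hl1 b (by simp)
        have hab : a = b := by
          have := Finset.card_le_one.1 hcard
          exact this a ha b hb
        have hrel : b ≠ a⁻¹ := (List.isChain_cons_cons.1 hl2).1
        have hainv : a⁻¹ ∈ S := hsym a ha
        have : a⁻¹ = b := Finset.card_le_one.1 hcard _ hainv _ hb
        exact hrel this.symm
    have hfin : (Γ : Set (PSL n)).Finite :=
      Set.Finite.subset (Set.Finite.insert 1 S.finite_toSet) hsub
    have : Finite Γ := hfin.to_subtype
    infer_instance
  · -- main case: |S| ≥ 2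
    push_neg at hcard
    set U : PSL n → Set (PC n) :=
      fun a => ⋃ b ∈ (S : Set (PSL n)) \ {a⁻¹}, (a • ·) '' A b with hU
    have hUsub : ∀ a ∈ S, U a ⊆ A a := fun a ha => (hstr a ha).subset
    have hUcomp : ∀ a ∈ S, IsCompact (U a) := by
      intro a _
      apply Set.Finite.isCompact_biUnion (Set.Finite.diff S.finite_toSet)
      rintro b ⟨hb, _⟩
      exact (hcomp b hb).1.image (continuous_psl_smul a)
    -- chosen points
    have hxex : ∀ a : {a : PSL n // a ∈ S}, ∃ p, p ∈ A a.1 \ U a.1 :=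
      fun a => Set.exists_of_ssubset (hstr a.1 a.2)
    choose x hxmem using hxex
    -- the compact "target" set
    set K : Set (PC n) := ⋃ a ∈ (S : Set (PSL n)), U a with hK
    have hKcomp : IsCompact K :=
      Set.Finite.isCompact_biUnion S.finite_toSet (fun a ha => hUcomp a ha)
    have hKclosed : IsClosed K := hKcomp.isClosed
    have hxK : ∀ a : {a : PSL n // a ∈ S}, x a ∉ K := by
      rintro a hmem
      rw [hK] at hmem
      simp only [Set.mem_iUnion] at hmem
      obtain ⟨b, hb, hxb⟩ := hmem
      by_cases hba : b = a.1
      · exact (hxmem a).2 (hba ▸ hxb)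
      · have hxa : (x a) ∈ A a.1 := (hxmem a).1
        have hd : Disjoint (A b) (A a.1) := hdisj hb a.2 hba
        exact Set.disjoint_left.1 hd (hUsub b hb hxb) hxa
    -- the open neighborhood of 1
    set W : Set (PSL n) :=
      ⋂ a : {a : PSL n // a ∈ S}, (fun g : PSL n => g • x a) ⁻¹' Kᶜ with hW
    have hWopen : IsOpen W :=
      isOpen_iInter_of_finite fun a => hKclosed.isOpen_compl.preimage (continuous_orbit (x a))
    have hW1 : (1 : PSL n) ∈ W := by
      rw [hW]
      simp only [Set.mem_iInter, Set.mem_preimage, Set.mem_compl_iff, one_smul]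
      exact fun a => hxK a
    -- ping-pong: key containment for reduced words
    have pingpong : ∀ (t : List (PSL n)) (a : PSL n), (∀ y ∈ a :: t, y ∈ S) →
        (a :: t).Chain' (fun p q => q ≠ p⁻¹) →
        ∃ c ∈ S, ∀ b ∈ S, b ≠ c⁻¹ → ((a :: t).prod • ·) '' A b ⊆ U a := by
      intro t
      induction t with
      | nil =>
        intro a hmem _
        refine ⟨a, hmem a (by simp), ?_⟩
        intro b hb hbc
        rw [List.prod_cons, List.prod_nil, mul_one]
        exact Set.subset_biUnion_of_mem (u := fun b => (a • ·) '' A b) ⟨hb, hbc⟩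
      | cons a' t' ih =>
        intro a hmem hchain
        have ha : a ∈ S := hmem a (by simp)
        have ha' : a' ∈ S := hmem a' (by simp)
        have hrel : a' ≠ a⁻¹ := (List.isChain_cons_cons.1 hchain).1
        obtain ⟨c, hc, hcprop⟩ := ih a' (fun y hy => hmem y (List.mem_cons_of_mem a hy))
          (List.isChain_cons_cons.1 hchain).2
        refine ⟨c, hc, ?_⟩
        intro b hb hbc
        have h1 : ((a' :: t').prod • ·) '' A b ⊆ A a' := (hcprop b hb hbc).trans (hUsub a' ha')
        have h2 : ((a :: a' :: t').prod • ·) '' A b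
            = (a • ·) '' (((a' :: t').prod • ·) '' A b) := by
          rw [List.prod_cons, Set.image_image]
          apply Set.image_congr'
          intro p
          rw [mul_smul]
        rw [h2]
        have h3 : (a • ·) '' (((a' :: t').prod • ·) '' A b) ⊆ (a • ·) '' A a' :=
          Set.image_mono h1
        refine h3.trans ?_
        exact Set.subset_biUnion_of_mem (u := fun b => (a • ·) '' A b) ⟨ha', hrel⟩
    -- every nontrivial element of Γ leaves W
    have hkey : ∀ g ∈ Γ, g ∈ W → g = 1 := by
      intro g hgΓ hgW
      by_contra hg1
      rw [← hclo] at hgΓ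
      obtain ⟨l, hl1, hl2, hl3⟩ := mem_closure_symm_list (fun a ha => hsym a ha) hgΓ
      match l, hl1, hl2, hl3 with
      | [], _, _, hl3 => exact hg1 (hl3.symm)
      | a :: t, hl1, hl2, hl3 =>
        obtain ⟨c, hc, hcprop⟩ := pingpong t a hl1 hl2
        obtain ⟨b, hb, hbc⟩ : ∃ b ∈ S, b ≠ c⁻¹ := by
          have hcinv : c⁻¹ ∈ S := hsym c hc
          obtain ⟨b, hb, hbne⟩ := Finset.exists_mem_ne hcard c⁻¹
          exact ⟨b, hb, hbne⟩
        have hxb : x ⟨b, hb⟩ ∈ A b := (hxmem ⟨b, hb⟩).1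
        have himg : g • x ⟨b, hb⟩ ∈ U a := by
          have := hcprop b hb hbc
          rw [hl3] at this
          exact this ⟨x ⟨b, hb⟩, hxb, rfl⟩
        have hgK : g • x ⟨b, hb⟩ ∈ K := by
          rw [hK]
          have haS : a ∈ S := hl1 a (by simp)
          exact Set.mem_biUnion haS himg
        rw [hW] at hgW
        simp only [Set.mem_iInter, Set.mem_preimage, Set.mem_compl_iff] at hgW
        exact hgW ⟨b, hb⟩ hgK
    -- conclude discreteness
    apply discreteTopology_of_isOpen_singleton_one
    have hset : ({1} : Set Γ) = (Subtype.val : Γ → PSL n) ⁻¹' W := by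
      ext γ
      simp only [Set.mem_singleton_iff, Set.mem_preimage]
      constructor
      · rintro rfl; exact hW1
      · intro hγ
        exact Subtype.ext (hkey γ.1 γ.2 hγ)
    rw [hset]
    exact hWopen.preimage continuous_subtype_val
end Paper
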